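/- For integers m₁, m₂, n₁, n₂, define f(α,β) = |m₁e^{iα} + m₂e^{-iα} + n₂e^{iβ} + n₁e^{-iβ}|² for real α, β. Then the minimum of f over all real α, β is strictly positive if and only if [(m₁+m₂)² − (n₁+n₂)²]·[(m₁−m₂)² − (n₁−n₂)²] > 0. -/

import Mathlib

open Real

private lemma circle_pt' (c s : ℝ) (h : c^2 + s^2 = 1) :
    ∃ β : ℝ, Real.cos β = c ∧ Real.sin β = s := by
  have hc : c ∈ Set.Icc (-1:ℝ) 1 := by constructor <;> nlinarith [sq_nonneg s]
  rcases le_or_gt 0 s with hs | hs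
  · refine ⟨Real.arccos c, Real.cos_arccos hc.1 hc.2, ?_⟩
    rw [Real.sin_arccos, show 1 - c^2 = s^2 by linarith, Real.sqrt_sq hs]
  · refine ⟨-Real.arccos c, by rw [Real.cos_neg]; exact Real.cos_arccos hc.1 hc.2, ?_⟩
    rw [Real.sin_neg, Real.sin_arccos, show 1 - c^2 = s^2 by linarith,
      Real.sqrt_sq_eq_abs, abs_of_nonpos hs.le]; ring

private lemma ratio_bds' {x y : ℝ} (hy : y ≠ 0) (h : x^2 ≤ y^2) : -1 ≤ -x/y ∧ -x/y ≤ 1 := by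
  have h1 : |x| ≤ |y| := by
    rw [← Real.sqrt_sq_eq_abs, ← Real.sqrt_sq_eq_abs]; exact Real.sqrt_le_sqrt h
  have h2 : |(-x/y)| ≤ 1 := by
    rw [abs_div, abs_neg, div_le_one (abs_pos.mpr hy)]; exact h1
  exact abs_le.mp h2

private lemma helper' (A B C D : ℝ) (hAB : A^2 ≤ B^2) (hCD : D^2 ≤ C^2) :
    ∃ α β : ℝ, A * cos α + B * cos β = 0 ∧ C * sin α + D * sin β = 0 := by
  rcases eq_or_ne B 0 with hB | hB
  · have hA : A = 0 := by nlinarith [sq_nonneg A]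
    rcases eq_or_ne C 0 with hC | hC
    · have hD : D = 0 := by nlinarith [sq_nonneg D]
      exact ⟨0, 0, by simp [hA, hB], by simp [hC, hD]⟩
    · obtain ⟨l1, l2⟩ := ratio_bds' hC hCD
      refine ⟨Real.arcsin (-D/C), π/2, by simp [hA, hB], ?_⟩
      rw [Real.sin_arcsin l1 l2, Real.sin_pi_div_two]
      field_simp
      ring
  · rcases eq_or_ne D 0 with hD | hD
    · obtain ⟨l1, l2⟩ := ratio_bds' hB hAB
      refine ⟨0, Real.arccos (-A/B), ?_, by simp [hD]⟩
      rw [Real.cos_arccos l1 l2, Real.cos_zero]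
      field_simp
      ring
    · set φ : ℝ → ℝ := fun t => (A/B)^2 * cos t ^2 + (C/D)^2 * sin t ^2 with hφ
      have hcont : ContinuousOn φ (Set.Icc 0 (π/2)) := by fun_prop
      have hB2 : (0:ℝ) < B^2 := by positivity
      have hD2 : (0:ℝ) < D^2 := by positivity
      have hr1 : (A/B)^2 ≤ 1 := by rw [div_pow, div_le_one hB2]; exact hAB
      have hr2 : 1 ≤ (C/D)^2 := by rw [div_pow, one_le_div hD2]; exact hCD
      have h0 : φ 0 ≤ 1 := by
        show (A/B)^2 * cos 0 ^2 + (C/D)^2 * sin 0 ^2 ≤ 1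
        rw [Real.cos_zero, Real.sin_zero]; nlinarith [hr1]
      have h1 : 1 ≤ φ (π/2) := by
        show 1 ≤ (A/B)^2 * cos (π/2) ^2 + (C/D)^2 * sin (π/2) ^2
        rw [Real.cos_pi_div_two, Real.sin_pi_div_two]; nlinarith [hr2]
      have hmem : (1:ℝ) ∈ Set.Icc (φ 0) (φ (π/2)) := ⟨h0, h1⟩
      obtain ⟨t, _, ht⟩ := intermediate_value_Icc (by positivity : (0:ℝ) ≤ π/2) hcont hmem
      obtain ⟨β, hcβ, hsβ⟩ := circle_pt' (-(A/B) * cos t) (-(C/D) * sin t)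
        (by rw [← ht]; show _ = (A/B)^2 * cos t ^2 + (C/D)^2 * sin t ^2; ring)
      refine ⟨t, β, ?_, ?_⟩
      · rw [hcβ]; field_simp; ring
      · rw [hsβ]; field_simp; ring

private lemma exists_zero' (A B C D : ℝ) (h : (A^2 - B^2) * (C^2 - D^2) ≤ 0) :
    ∃ α β : ℝ, A * cos α + B * cos β = 0 ∧ C * sin α + D * sin β = 0 := by
  rcases mul_nonpos_iff.mp h with ⟨h1, h2⟩ | ⟨h1, h2⟩
  · obtain ⟨α, β, e1, e2⟩ := helper' B A D C (by linarith) (by linarith)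
    exact ⟨β, α, by linarith, by linarith⟩
  · exact helper' A B C D (by linarith) (by linarith)

private lemma no_zero' (A B C D α β : ℝ) (h : 0 < (A^2 - B^2) * (C^2 - D^2))
    (e1 : A * cos α + B * cos β = 0) (e2 : C * sin α + D * sin β = 0) : False := by
  have s1 := sin_sq_add_cos_sq α
  have s2 := sin_sq_add_cos_sq β
  have e1' : A * cos α = -(B * cos β) := by linarith
  have e2' : C * sin α = -(D * sin β) := by linarith
  have q1 : A^2 * cos α ^2 = B^2 * cos β ^2 := by
    rw [show A^2 * cos α^2 = (A*cos α)^2 from by ring, e1']; ring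
  have q2 : C^2 * sin α ^2 = D^2 * sin β ^2 := by
    rw [show C^2 * sin α^2 = (C*sin α)^2 from by ring, e2']; ring
  have hx0 : (0:ℝ) ≤ cos α ^2 := sq_nonneg _
  have hy0 : (0:ℝ) ≤ cos β ^2 := sq_nonneg _
  have hsx0 : (0:ℝ) ≤ sin α ^2 := sq_nonneg _
  have hsy0 : (0:ℝ) ≤ sin β ^2 := sq_nonneg _
  rcases mul_pos_iff.mp h with ⟨h1, h2⟩ | ⟨h1, h2⟩
  · have hA : (0:ℝ) < A^2 := by nlinarith [sq_nonneg B]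
    have hC : (0:ℝ) < C^2 := by nlinarith [sq_nonneg D]
    have hxy : cos α ^2 ≤ cos β ^2 := by
      by_contra hcon
      push_neg at hcon
      nlinarith [mul_pos hA (sub_pos.mpr hcon), mul_nonneg h1.le hy0]
    have hyx : cos β ^2 ≤ cos α ^2 := by
      by_contra hcon
      push_neg at hcon
      have hss : sin β ^2 < sin α ^2 := by linarith
      nlinarith [mul_pos hC (sub_pos.mpr hss), mul_nonneg h2.le hsy0]
    have hxy' : cos α ^2 = cos β ^2 := le_antisymm hxy hyx
    rw [hxy'] at q1 s1
    have e3 : (A^2-B^2) * cos β ^2 = 0 := by linear_combination q1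
    have hy : cos β ^2 = 0 := by
      rcases mul_eq_zero.mp e3 with h' | h'
      · exact absurd h' h1.ne'
      · exact h'
    have hsa : sin α ^2 = 1 := by linarith
    have hsb : sin β ^2 = 1 := by linarith
    rw [hsa, hsb, mul_one, mul_one] at q2
    linarith
  · have hB : (0:ℝ) < B^2 := by nlinarith [sq_nonneg A]
    have hD : (0:ℝ) < D^2 := by nlinarith [sq_nonneg C]
    have hxy : cos β ^2 ≤ cos α ^2 := by
      by_contra hcon
      push_neg at hcon
      nlinarith [mul_pos hB (sub_pos.mpr hcon), mul_nonneg (neg_nonneg.mpr h1.le) hx0]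
    have hyx : cos α ^2 ≤ cos β ^2 := by
      by_contra hcon
      push_neg at hcon
      have hss : sin α ^2 < sin β ^2 := by linarith
      nlinarith [mul_pos hD (sub_pos.mpr hss), mul_nonneg (neg_nonneg.mpr h2.le) hsx0]
    have hxy' : cos α ^2 = cos β ^2 := le_antisymm hyx hxy
    rw [hxy'] at q1 s1
    have e3 : (A^2-B^2) * cos β ^2 = 0 := by linear_combination q1
    have hy : cos β ^2 = 0 := by
      rcases mul_eq_zero.mp e3 with h' | h'
      · exact absurd h' h1.ne
      · exact h'
    have hsa : sin α ^2 = 1 := by linarith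
    have hsb : sin β ^2 = 1 := by linarith
    rw [hsa, hsb, mul_one, mul_one] at q2
    linarith

theorem stmt_0 (m₁ m₂ n₁ n₂ : ℤ) :
    (0 < ⨅ p : ℝ × ℝ,
      ‖(m₁ : ℂ) * Complex.exp (Complex.I * (p.1 : ℂ))
        + (m₂ : ℂ) * Complex.exp (-(Complex.I * (p.1 : ℂ)))
        + (n₂ : ℂ) * Complex.exp (Complex.I * (p.2 : ℂ))
        + (n₁ : ℂ) * Complex.exp (-(Complex.I * (p.2 : ℂ)))‖ ^ 2) ↔
    ((m₁ + m₂) ^ 2 - (n₁ + n₂) ^ 2) * ((m₁ - m₂) ^ 2 - (n₁ - n₂) ^ 2) > 0 := by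
  set A : ℝ := (m₁:ℝ) + m₂ with hA
  set B : ℝ := (n₁:ℝ) + n₂ with hB
  set C : ℝ := (m₁:ℝ) - m₂ with hC
  set D : ℝ := (n₂:ℝ) - n₁ with hD
  set F : ℝ × ℝ → ℝ := fun p =>
      ‖(m₁ : ℂ) * Complex.exp (Complex.I * (p.1 : ℂ))
        + (m₂ : ℂ) * Complex.exp (-(Complex.I * (p.1 : ℂ)))
        + (n₂ : ℂ) * Complex.exp (Complex.I * (p.2 : ℂ))
        + (n₁ : ℂ) * Complex.exp (-(Complex.I * (p.2 : ℂ)))‖ ^ 2 with hF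
  set G : ℝ × ℝ → ℝ := fun p =>
      (A * cos p.1 + B * cos p.2)^2 + (C * sin p.1 + D * sin p.2)^2 with hGdef
  have hFeq : ∀ p : ℝ × ℝ, F p = G p := by
    intro p
    have h1 : ((m₁ : ℂ) * Complex.exp (Complex.I * (p.1 : ℂ))
        + (m₂ : ℂ) * Complex.exp (-(Complex.I * (p.1 : ℂ)))
        + (n₂ : ℂ) * Complex.exp (Complex.I * (p.2 : ℂ))
        + (n₁ : ℂ) * Complex.exp (-(Complex.I * (p.2 : ℂ))))
      = Complex.ofReal (A * cos p.1 + B * cos p.2)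
        + Complex.ofReal (C * sin p.1 + D * sin p.2) * Complex.I := by
      simp only [Complex.ext_iff, Complex.add_re, Complex.add_im, Complex.mul_re, Complex.mul_im,
        Complex.exp_re, Complex.exp_im, Complex.I_re, Complex.I_im, Complex.ofReal_re,
        Complex.ofReal_im, Complex.neg_re, Complex.neg_im, Complex.intCast_re, Complex.intCast_im,
        hA, hB, hC, hD]
      constructor <;> simp [Real.cos_neg, Real.sin_neg] <;> ring
    show ‖_‖ ^ 2 = _
    rw [h1, Complex.sq_norm, Complex.normSq_add_mul_I]
  have hG0 : ∀ p, 0 ≤ G p := fun p => by positivity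
  have hBdd : BddBelow (Set.range F) := by
    refine ⟨0, ?_⟩
    rintro x ⟨p, rfl⟩
    rw [hFeq]; exact hG0 p
  have hcast : ((((m₁ + m₂) ^ 2 - (n₁ + n₂) ^ 2) * ((m₁ - m₂) ^ 2 - (n₁ - n₂) ^ 2) : ℤ) : ℝ)
      = (A^2 - B^2) * (C^2 - D^2) := by
    rw [hA, hB, hC, hD]; push_cast; ring
  constructor
  · intro hpos
    by_contra hle
    push_neg at hle
    have hleR : (A^2 - B^2) * (C^2 - D^2) ≤ 0 := by
      rw [← hcast]
      exact_mod_cast hle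
    obtain ⟨α, β, e1, e2⟩ := exists_zero' A B C D hleR
    have h0 : F (α, β) = 0 := by
      rw [hFeq]
      show (A * cos α + B * cos β)^2 + (C * sin α + D * sin β)^2 = 0
      rw [e1, e2]; ring
    have hle' : ⨅ p : ℝ × ℝ, F p ≤ 0 := (ciInf_le hBdd (α, β)).trans_eq h0
    exact absurd hpos (by rw [hF] at hle' ⊢; linarith)
  · intro hprod
    have hprodR : 0 < (A^2 - B^2) * (C^2 - D^2) := by
      rw [← hcast]
      exact_mod_cast hprod
    have h2π : (0:ℝ) < 2 * π := by positivity
    have hK : IsCompact ((Set.Icc (0:ℝ) (2*π)) ×ˢ (Set.Icc (0:ℝ) (2*π))) :=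
      isCompact_Icc.prod isCompact_Icc
    have hKne : ((Set.Icc (0:ℝ) (2*π)) ×ˢ (Set.Icc (0:ℝ) (2*π))).Nonempty :=
      ⟨(0, 0), ⟨⟨le_refl 0, h2π.le⟩, ⟨le_refl 0, h2π.le⟩⟩⟩
    have hcont : ContinuousOn G ((Set.Icc (0:ℝ) (2*π)) ×ˢ (Set.Icc (0:ℝ) (2*π))) := by
      apply Continuous.continuousOn; fun_prop
    obtain ⟨p₀, hp₀K, hmin⟩ := hK.exists_isMinOn hKne hcont
    have hp₀pos : 0 < G p₀ := by
      rcases (hG0 p₀).lt_or_eq with h' | h'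
      · exact h'
      · exfalso
        have hz : (A * cos p₀.1 + B * cos p₀.2)^2 + (C * sin p₀.1 + D * sin p₀.2)^2 = 0 := h'.symm
        have e1 : A * cos p₀.1 + B * cos p₀.2 = 0 := by
          nlinarith [sq_nonneg (A * cos p₀.1 + B * cos p₀.2), sq_nonneg (C * sin p₀.1 + D * sin p₀.2)]
        have e2 : C * sin p₀.1 + D * sin p₀.2 = 0 := by
          nlinarith [sq_nonneg (A * cos p₀.1 + B * cos p₀.2), sq_nonneg (C * sin p₀.1 + D * sin p₀.2)]
        exact no_zero' A B C D p₀.1 p₀.2 hprodR e1 e2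
    refine lt_of_lt_of_le hp₀pos (le_ciInf ?_)
    intro p
    rw [hFeq]
    have hmem : (p.1 - ⌊p.1 / (2*π)⌋ * (2*π), p.2 - ⌊p.2 / (2*π)⌋ * (2*π))
        ∈ (Set.Icc (0:ℝ) (2*π)) ×ˢ (Set.Icc (0:ℝ) (2*π)) := by
      constructor
      · exact ⟨Int.sub_floor_div_mul_nonneg p.1 h2π, (Int.sub_floor_div_mul_lt p.1 h2π).le⟩
      · exact ⟨Int.sub_floor_div_mul_nonneg p.2 h2π, (Int.sub_floor_div_mul_lt p.2 h2π).le⟩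
    have hGper : G (p.1 - ⌊p.1 / (2*π)⌋ * (2*π), p.2 - ⌊p.2 / (2*π)⌋ * (2*π)) = G p := by
      show (A * cos _ + B * cos _)^2 + (C * sin _ + D * sin _)^2 = _
      rw [Real.cos_sub_int_mul_two_pi, Real.cos_sub_int_mul_two_pi,
        Real.sin_sub_int_mul_two_pi, Real.sin_sub_int_mul_two_pi]
    calc G p₀ ≤ G (p.1 - ⌊p.1 / (2*π)⌋ * (2*π), p.2 - ⌊p.2 / (2*π)⌋ * (2*π)) :=
          isMinOn_iff.mp hmin _ hmem
      _ = G p := hGper
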